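/- Let u be uniformly distributed on the unit sphere of R^N and let s_1,...,s_N be nonnegative constants satisfying s_k ≤ b·s̄ for all k, where s̄ = N^{-1}∑_k s_k > 0. Then for every t > 0, Pr{∑_{k=1}^N s_k u_k² ≥ s̄(1 + t)} ≤ exp(-N t² / (4b(b+t))) and Pr{∑_{k=1}^N s_k u_k² ≤ s̄(1 - t)} ≤ exp(-N t² / (4b(b+t))). -/

import Mathlib

open MeasureTheory Real Set Metric

/-- The uniform (normalized Haar) probability measure on the unit sphere of `ℝ^N`. -/
noncomputable def sphereUniform (N : ℕ) :
    Measure (Metric.sphere (0 : EuclideanSpace ℝ (Fin N)) 1) :=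
  ((volume : Measure (EuclideanSpace ℝ (Fin N))).toSphere Set.univ)⁻¹ •
    (volume : Measure (EuclideanSpace ℝ (Fin N))).toSphere

lemma hasDerivAt_aux (c : ℝ) (x : ℝ) (h1 : (1:ℝ) - x ≠ 0) :
    HasDerivAt (fun y : ℝ => Real.log (1 - y) + (y + y^2/(2*c)))
      (-(1-x)⁻¹ + (1 + x/c)) x := by
  have hlog : HasDerivAt (fun y : ℝ => Real.log (1 - y)) (-(1-x)⁻¹) x := by
    have := ((hasDerivAt_id x).const_sub 1).log h1
    simpa [div_eq_mul_inv] using this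
  have hpoly : HasDerivAt (fun y : ℝ => y + y^2/(2*c)) (1 + x/c) x := by
    have h2 : HasDerivAt (fun y : ℝ => y^2/(2*c)) (2*x/(2*c)) x := by
      simpa using (hasDerivAt_pow 2 x).div_const (2*c)
    have := (hasDerivAt_id' x).add h2
    exact this.congr_deriv (by rw [mul_div_mul_left x c (by norm_num : (2:ℝ) ≠ 0)])
  exact hlog.add hpoly

lemma contOn_aux (c : ℝ) {D : Set ℝ} (hD : ∀ x ∈ D, x < 1) :
    ContinuousOn (fun y : ℝ => Real.log (1 - y) + (y + y^2/(2*c))) D := by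
  refine ContinuousOn.add ?_ (by fun_prop)
  refine ContinuousOn.log (by fun_prop) ?_
  intro x hx
  have := hD x hx
  intro h; rw [sub_eq_zero] at h; linarith

/-- For `y ≤ c`, `0 ≤ c < 1`: `-(y + y²/(2(1-c))) ≤ log (1-y)`. -/
lemma log_one_sub_ge {y c : ℝ} (hc0 : 0 ≤ c) (hc1 : c < 1) (hy : y ≤ c) :
    -(y + y^2/(2*(1-c))) ≤ Real.log (1 - y) := by
  have h1c : (0:ℝ) < 1 - c := by linarith
  rcases le_or_gt y 0 with hy0 | hy0
  · have key : AntitoneOn (fun y : ℝ => Real.log (1 - y) + (y + y^2/(2*1))) (Set.Iic 0) := by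
      refine antitoneOn_of_deriv_nonpos (convex_Iic 0)
        (contOn_aux 1 (fun x hx => lt_of_le_of_lt hx one_pos)) ?_ ?_
      · intro x hx
        rw [interior_Iic] at hx
        exact ((hasDerivAt_aux 1 x (by intro h; rw [sub_eq_zero] at h; simp at hx; linarith)).differentiableAt).differentiableWithinAt
      · intro x hx
        rw [interior_Iic] at hx
        have hx1 : (1:ℝ) - x ≠ 0 := by intro h; rw [sub_eq_zero] at h; simp at hx; linarith
        rw [(hasDerivAt_aux 1 x hx1).deriv]
        have hx1' : (0:ℝ) < 1 - x := by simp at hx; linarith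
        have heq : -(1-x)⁻¹ + (1 + x/1) = -x^2/(1-x) := by field_simp; ring
        rw [heq]
        apply div_nonpos_of_nonpos_of_nonneg (by nlinarith) (le_of_lt hx1')
    have h0 := key (Set.mem_Iic.2 hy0) (Set.mem_Iic.2 le_rfl) hy0
    simp only [sub_zero, Real.log_one] at h0
    -- h0 : log 1 + 0 ≤ log(1-y) + (y + y²/2)
    have hsq : y^2/(2*(1-c)) ≥ y^2/(2*1) := by
      apply div_le_div_of_nonneg_left (sq_nonneg y) (by linarith) (by linarith)
    norm_num at h0
    nlinarith [h0, hsq]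
  · have key : MonotoneOn (fun y : ℝ => Real.log (1 - y) + (y + y^2/(2*(1-c)))) (Set.Icc 0 c) := by
      refine monotoneOn_of_deriv_nonneg (convex_Icc 0 c)
        (contOn_aux (1-c) (fun x hx => lt_of_le_of_lt hx.2 hc1)) ?_ ?_
      · intro x hx
        rw [interior_Icc] at hx
        exact ((hasDerivAt_aux (1-c) x (by intro h; rw [sub_eq_zero] at h; linarith [hx.2])).differentiableAt).differentiableWithinAt
      · intro x hx
        rw [interior_Icc] at hx
        obtain ⟨hx0, hxc⟩ := hx
        have hx1 : (1:ℝ) - x ≠ 0 := by intro h; rw [sub_eq_zero] at h; linarith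
        rw [(hasDerivAt_aux (1-c) x hx1).deriv]
        have hx1' : (0:ℝ) < 1 - x := by linarith
        have : -(1-x)⁻¹ + (1 + x/(1-c)) = x*((1-x) - (1-c))/((1-c)*(1-x)) := by
          field_simp; ring
        rw [this]
        apply div_nonneg (by nlinarith) (by positivity)
    have h0 := key (Set.mem_Icc.2 ⟨le_rfl, hc0⟩) (Set.mem_Icc.2 ⟨le_of_lt hy0, hy⟩) (le_of_lt hy0)
    simp only [sub_zero, Real.log_one] at h0
    norm_num at h0
    linarith

lemma sqrt_eq_exp_half_log {x : ℝ} (hx : 0 < x) : Real.sqrt x = Real.exp (Real.log x / 2) := by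
  rw [show Real.sqrt x = x ^ (1/2 : ℝ) from Real.sqrt_eq_rpow x, Real.rpow_def_of_pos hx]
  ring_nf

lemma chernoff_prod (N : ℕ) (a : Fin N → ℝ) (B r : ℝ) (hB : 0 < B) (hr : 0 < r)
    (ha : ∀ k, a k ≤ B) (hsum : ∑ k, a k ≤ -(N*r)) (hV : ∑ k, (a k)^2 ≤ N*B^2) :
    (∀ k, 0 < 1 - (r/(B*(B+r))) * a k) ∧
    ∏ k, Real.sqrt (π/(1 - (r/(B*(B+r))) * a k)) ≤
      Real.exp (-(N*r^2)/(4*B*(B+r))) * (Real.sqrt π)^N := by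
  set l : ℝ := r/(B*(B+r)) with hl_def
  set c : ℝ := r/(B+r) with hc_def
  have hBr : 0 < B + r := by linarith
  have hl : 0 < l := by positivity
  have hc0 : 0 < c := by positivity
  have hc1 : c < 1 := by rw [hc_def, div_lt_one hBr]; linarith
  have h1c : 1 - c = B/(B+r) := by rw [hc_def]; field_simp; ring
  have hlB : l * B = c := by rw [hl_def, hc_def]; field_simp
  have hy : ∀ k, l * a k ≤ c := fun k => hlB ▸ (mul_le_mul_of_nonneg_left (ha k) hl.le)
  have pos : ∀ k, 0 < 1 - l * a k := fun k => by have := hy k; linarith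
  refine ⟨pos, ?_⟩
  set T : ℝ := -(N*r^2)/(4*B*(B+r)) with hT_def
  have hS : -2*T ≤ ∑ k, Real.log (1 - l * a k) := by
    have step : ∀ k, -(l * a k) - l^2 * (a k)^2/(2*(1-c)) ≤ Real.log (1 - l * a k) := by
      intro k
      have := log_one_sub_ge hc0.le hc1 (hy k)
      have e : (l * a k)^2 = l^2 * (a k)^2 := by ring
      rw [e] at this; linarith
    calc -2*T ≤ ∑ k, (-(l * a k) - l^2 * (a k)^2/(2*(1-c))) := by
          rw [Finset.sum_sub_distrib]
          have e1 : ∑ k, -(l * a k) = -l * ∑ k, a k := by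
            rw [Finset.mul_sum]; apply Finset.sum_congr rfl; intros; ring
          have e2 : ∑ k, l^2 * (a k)^2/(2*(1-c)) = (l^2/(2*(1-c))) * ∑ k, (a k)^2 := by
            rw [Finset.mul_sum]; apply Finset.sum_congr rfl; intros; ring
          rw [e1, e2]
          have h2c : 0 < 1 - c := by linarith
          have hb1 : -l * ∑ k, a k ≥ l * (N*r) := by
            have := mul_le_mul_of_nonneg_left hsum hl.le
            nlinarith
          have hb2 : (l^2/(2*(1-c))) * ∑ k, (a k)^2 ≤ (l^2/(2*(1-c))) * (N*B^2) :=
            mul_le_mul_of_nonneg_left hV (by positivity)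
          have harith : l * (N*r) - (l^2/(2*(1-c))) * (N*B^2) = -2*T := by
            rw [hT_def, hl_def, h1c]
            field_simp
            ring
          linarith
      _ ≤ _ := Finset.sum_le_sum (fun k _ => step k)
  have prod_eq : ∏ k, Real.sqrt (π/(1 - l * a k))
      = Real.exp (∑ k, Real.log (π/(1 - l * a k)) / 2) := by
    rw [Real.exp_sum]
    exact Finset.prod_congr rfl (fun k _ => sqrt_eq_exp_half_log (div_pos pi_pos (pos k)))
  rw [prod_eq]
  have : ∑ k, Real.log (π/(1 - l * a k)) / 2 ≤ T + N * (Real.log π / 2) := by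
    have e : ∀ k, Real.log (π/(1 - l * a k)) / 2
        = Real.log π / 2 - Real.log (1 - l * a k) / 2 := by
      intro k
      rw [Real.log_div (ne_of_gt pi_pos) (ne_of_gt (pos k))]
      ring
    rw [Finset.sum_congr rfl (fun k _ => e k), Finset.sum_sub_distrib,
      Finset.sum_const, ← Finset.sum_div]
    simp only [Finset.card_univ, Fintype.card_fin, nsmul_eq_mul]
    linarith
  calc Real.exp (∑ k, Real.log (π/(1 - l * a k)) / 2) ≤ Real.exp (T + N * (Real.log π / 2)) :=
        Real.exp_le_exp.2 this
    _ = Real.exp T * (Real.sqrt π)^N := by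
        rw [Real.exp_add, Real.exp_nat_mul, ← sqrt_eq_exp_half_log pi_pos]

variable {N : ℕ}

lemma norm_sq_eq (x : EuclideanSpace ℝ (Fin N)) : ‖x‖^2 = ∑ k, (x k)^2 := by
  rw [EuclideanSpace.norm_eq, sq_sqrt (by positivity)]
  simp [sq_abs]


/-- Polar decomposition identity for scale-invariant sets. -/
lemma keyA (hN : 0 < N) (p : EuclideanSpace ℝ (Fin N) → Prop)
    (hp : MeasurableSet {x | p x})
    (hscale : ∀ c : ℝ, 0 < c → ∀ x, p (c • x) ↔ p x) :
    (volume : Measure (EuclideanSpace ℝ (Fin N))).toSphere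
        {u : sphere (0 : EuclideanSpace ℝ (Fin N)) 1 | p u.val}
      * ∫⁻ r : Ioi (0:ℝ), ENNReal.ofReal (rexp (-(r:ℝ)^2)) ∂(Measure.volumeIoiPow (N-1))
    = ∫⁻ x in {x | p x} ∩ {0}ᶜ, ENNReal.ofReal (rexp (-‖x‖^2)) := by
  have : Nonempty (Fin N) := ⟨⟨0, hN⟩⟩
  have mp := (volume : Measure (EuclideanSpace ℝ (Fin N))).measurePreserving_homeomorphUnitSphereProd
  rw [finrank_euclideanSpace_fin] at mp
  have hAm : MeasurableSet {u : sphere (0 : EuclideanSpace ℝ (Fin N)) 1 | p u.val} :=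
    hp.preimage measurable_subtype_coe
  have hFm : Measurable (fun q : sphere (0 : EuclideanSpace ℝ (Fin N)) 1 × Ioi (0:ℝ) =>
      Set.indicator {u : sphere (0 : EuclideanSpace ℝ (Fin N)) 1 | p u.val} 1 q.1
        * ENNReal.ofReal (rexp (-(q.2:ℝ)^2))) := by
    apply Measurable.mul
    · exact ((measurable_indicator_const_iff 1).2 hAm).comp measurable_fst
    · apply Measurable.ennreal_ofReal
      apply Measurable.comp Real.measurable_exp
      fun_prop
  have key := mp.lintegral_comp hFm
  have hf : Measurable (Set.indicator {u : sphere (0 : EuclideanSpace ℝ (Fin N)) 1 | p u.val}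
      (1 : sphere (0 : EuclideanSpace ℝ (Fin N)) 1 → ENNReal)) :=
    (measurable_indicator_const_iff 1).2 hAm
  rw [lintegral_prod_mul hf.aemeasurable
      ((by fun_prop : Measurable fun r : Ioi (0:ℝ) => ENNReal.ofReal (rexp (-(r:ℝ)^2)))).aemeasurable,
      lintegral_indicator_one hAm] at key
  rw [← key]
  have hFh : ∀ x : ({0}ᶜ : Set (EuclideanSpace ℝ (Fin N))),
      Set.indicator {u : sphere (0 : EuclideanSpace ℝ (Fin N)) 1 | p u.val} 1
          ((homeomorphUnitSphereProd (EuclideanSpace ℝ (Fin N)) x).1)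
        * ENNReal.ofReal (rexp (-(((homeomorphUnitSphereProd (EuclideanSpace ℝ (Fin N)) x).2:ℝ))^2))
        = ({x : EuclideanSpace ℝ (Fin N) | p x} ∩ {0}ᶜ).indicator
            (fun x => ENNReal.ofReal (rexp (-‖x‖^2))) x.val := by
    rintro ⟨x, hx⟩
    have hx0 : x ≠ 0 := hx
    have hnorm : (0:ℝ) < ‖x‖ := norm_pos_iff.2 hx0
    have hmem : p (‖x‖⁻¹ • x) ↔ p x := hscale _ (by positivity) x
    have hm1 : ((homeomorphUnitSphereProd (EuclideanSpace ℝ (Fin N)) ⟨x, hx⟩).1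
        ∈ {u : sphere (0 : EuclideanSpace ℝ (Fin N)) 1 | p u.val}) ↔ p x := by
      simp only [Set.mem_setOf_eq, homeomorphUnitSphereProd_apply_fst_coe]
      exact hmem
    simp only [homeomorphUnitSphereProd_apply_snd_coe]
    by_cases hpx : p x
    · rw [Set.indicator_of_mem (hm1.mpr hpx),
        Set.indicator_of_mem (show x ∈ ({x | p x} ∩ {0}ᶜ : Set (EuclideanSpace ℝ (Fin N))) from ⟨hpx, hx0⟩)]
      simp
    · rw [Set.indicator_of_notMem (fun h => hpx (hm1.mp h)),
        Set.indicator_of_notMem (fun h => hpx h.1)]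
      simp
  calc ∫⁻ (a : ({0}ᶜ : Set (EuclideanSpace ℝ (Fin N)))),
        Set.indicator {u : sphere (0 : EuclideanSpace ℝ (Fin N)) 1 | p u.val} 1
          ((homeomorphUnitSphereProd (EuclideanSpace ℝ (Fin N)) a).1)
        * ENNReal.ofReal (rexp (-(((homeomorphUnitSphereProd (EuclideanSpace ℝ (Fin N)) a).2:ℝ))^2))
        ∂(Measure.comap Subtype.val volume)
      = ∫⁻ a : ({0}ᶜ : Set (EuclideanSpace ℝ (Fin N))),
          ({x : EuclideanSpace ℝ (Fin N) | p x} ∩ {0}ᶜ).indicator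
            (fun x => ENNReal.ofReal (rexp (-‖x‖^2))) a.val ∂(Measure.comap Subtype.val volume) :=
        lintegral_congr hFh
    _ = ∫⁻ x in ({0}ᶜ : Set (EuclideanSpace ℝ (Fin N))),
          ({x : EuclideanSpace ℝ (Fin N) | p x} ∩ {0}ᶜ).indicator
            (fun x => ENNReal.ofReal (rexp (-‖x‖^2))) x := by
        exact lintegral_subtype_comap (measurableSet_singleton _).compl _
    _ = ∫⁻ x in {x | p x} ∩ {0}ᶜ, ENNReal.ofReal (rexp (-‖x‖^2)) := by
        rw [lintegral_indicator (hp.inter (measurableSet_singleton _).compl),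
          Measure.restrict_restrict (hp.inter (measurableSet_singleton _).compl)]
        congr 1
        rw [Set.inter_assoc, Set.inter_self]

lemma gaussLike (c : Fin N → ℝ) (hc : ∀ k, 0 < c k) :
    ∫⁻ x : EuclideanSpace ℝ (Fin N), ENNReal.ofReal (∏ k, rexp (-(c k) * (x k)^2))
      = ENNReal.ofReal (∏ k, Real.sqrt (π / c k)) := by
  have hmeas : Measurable (fun x : EuclideanSpace ℝ (Fin N) =>
      ENNReal.ofReal (∏ k, rexp (-(c k) * (x k)^2))) := by fun_prop
  have mp := (EuclideanSpace.volume_preserving_symm_measurableEquiv_toLp (Fin N)).symm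
  rw [← mp.lintegral_comp hmeas]
  have hint : Integrable (fun y : Fin N → ℝ => ∏ k, rexp (-(c k) * (y k)^2)) :=
    Integrable.fintype_prod (fun k => integrable_exp_neg_mul_sq (hc k))
  have heq : ∀ y : Fin N → ℝ,
      ENNReal.ofReal (∏ k, rexp (-(c k) * (((MeasurableEquiv.toLp 2 (Fin N → ℝ)).symm.symm y) k)^2))
        = ENNReal.ofReal (∏ k, rexp (-(c k) * (y k)^2)) := fun y => rfl
  rw [lintegral_congr heq, ← ofReal_integral_eq_lintegral_ofReal hint
      (Filter.Eventually.of_forall fun y => Finset.prod_nonneg fun k _ => (exp_pos _).le)]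
  rw [MeasureTheory.integral_fintype_prod_volume_eq_prod (f := fun k (x:ℝ) => rexp (-(c k) * x^2))]
  congr 1
  exact Finset.prod_congr rfl fun k _ => integral_gaussian (c k)

lemma tail_bound (hN : 0 < N) (a : Fin N → ℝ) (B r : ℝ) (hB : 0 < B) (hr : 0 < r)
    (ha : ∀ k, a k ≤ B) (hsum : ∑ k, a k ≤ -(N*r)) (hV : ∑ k, (a k)^2 ≤ N*B^2) :
    sphereUniform N {u | 0 ≤ ∑ k, a k * ((u : EuclideanSpace ℝ (Fin N)) k)^2}
      ≤ ENNReal.ofReal (rexp (-(N*r^2)/(4*B*(B+r)))) := by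
  have : Nonempty (Fin N) := ⟨⟨0, hN⟩⟩
  have hnt : Nontrivial (EuclideanSpace ℝ (Fin N)) := inferInstance
  obtain ⟨hpos, hprod⟩ := chernoff_prod N a B r hB hr ha hsum hV
  set l : ℝ := r/(B*(B+r)) with hl_def
  have hl : 0 ≤ l := by positivity
  -- the scale-invariant predicate
  set p : EuclideanSpace ℝ (Fin N) → Prop := fun x => 0 ≤ ∑ k, a k * (x k)^2 with hp_def
  have hqm : Measurable (fun x : EuclideanSpace ℝ (Fin N) => ∑ k, a k * (x k)^2) := by fun_prop
  have hp : MeasurableSet {x | p x} := measurableSet_le measurable_const hqm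
  have hscale : ∀ c : ℝ, 0 < c → ∀ x, p (c • x) ↔ p x := by
    intro c hc x
    have he : ∑ k, a k * ((c • x) k)^2 = c^2 * ∑ k, a k * (x k)^2 := by
      rw [Finset.mul_sum]
      apply Finset.sum_congr rfl
      intro k _
      have : (c • x) k = c * x k := rfl
      rw [this]; ring
    simp only [hp_def, he]
    constructor
    · intro h
      have hc2 : (0:ℝ) < c^2 := by positivity
      exact le_of_mul_le_mul_left (by linarith) hc2
    · intro h; positivity
  set J : ENNReal :=
    ∫⁻ r : Ioi (0:ℝ), ENNReal.ofReal (rexp (-(r:ℝ)^2)) ∂(Measure.volumeIoiPow (N-1)) with hJ_def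
  set U : ENNReal := (volume : Measure (EuclideanSpace ℝ (Fin N))).toSphere Set.univ with hU_def
  set X : ENNReal := (volume : Measure (EuclideanSpace ℝ (Fin N))).toSphere
      {u : sphere (0 : EuclideanSpace ℝ (Fin N)) 1 | p u.val} with hX_def
  -- U * J = (√π)^N
  have hUJ : U * J = ENNReal.ofReal ((Real.sqrt π)^N) := by
    have h1 := keyA hN (fun _ => True) MeasurableSet.univ (fun c hc x => Iff.rfl)
    have h2 : {x : EuclideanSpace ℝ (Fin N) | True} ∩ {0}ᶜ = ({0}ᶜ : Set _) := by simp
    rw [h2] at h1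
    simp only [Set.setOf_true] at h1
    have h3 : (∫⁻ x in ({0}ᶜ : Set (EuclideanSpace ℝ (Fin N))), ENNReal.ofReal (rexp (-‖x‖^2)))
        = ∫⁻ x : EuclideanSpace ℝ (Fin N), ENNReal.ofReal (rexp (-‖x‖^2)) := by
      rw [MeasureTheory.restrict_compl_singleton]
    have h4 : (∫⁻ x : EuclideanSpace ℝ (Fin N), ENNReal.ofReal (rexp (-‖x‖^2)))
        = ENNReal.ofReal ((Real.sqrt π)^N) := by
      have hg := gaussLike (fun _ : Fin N => (1:ℝ)) (fun _ => one_pos)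
      have e2 : (∏ _k : Fin N, Real.sqrt (π / (1:ℝ))) = (Real.sqrt π)^N := by simp
      rw [e2] at hg
      rw [← hg]
      apply lintegral_congr
      intro x
      congr 1
      rw [← Real.exp_sum, norm_sq_eq]
      congr 1
      rw [← Finset.sum_neg_distrib]
      exact Finset.sum_congr rfl fun k _ => by ring
    rw [hU_def, hJ_def, h1, h3, h4]
  -- Chernoff: X * J ≤ ofReal (∏ √(π/(1 - l a k)))
  have hXJ : X * J ≤ ENNReal.ofReal (∏ k, Real.sqrt (π/(1 - l * a k))) := by
    rw [hX_def, hJ_def, keyA hN p hp hscale]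
    calc ∫⁻ x in {x | p x} ∩ {0}ᶜ, ENNReal.ofReal (rexp (-‖x‖^2))
        ≤ ∫⁻ x in {x | p x} ∩ {0}ᶜ,
            ENNReal.ofReal (∏ k, rexp (-(1 - l * a k) * (x k)^2)) := by
          apply setLIntegral_mono' (hp.inter (measurableSet_singleton _).compl)
          intro x hx
          apply ENNReal.ofReal_le_ofReal
          rw [← Real.exp_sum]
          apply Real.exp_le_exp.2
          have hq : (0:ℝ) ≤ ∑ k, a k * (x k)^2 := hx.1
          have e1 : ∑ k, -(1 - l * a k) * (x k)^2
              = -‖x‖^2 + l * ∑ k, a k * (x k)^2 := by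
            rw [norm_sq_eq, Finset.mul_sum, ← Finset.sum_neg_distrib, ← Finset.sum_add_distrib]
            apply Finset.sum_congr rfl
            intro k _; ring
          rw [e1]
          nlinarith [mul_nonneg hl hq]
      _ ≤ ∫⁻ x : EuclideanSpace ℝ (Fin N),
            ENNReal.ofReal (∏ k, rexp (-(1 - l * a k) * (x k)^2)) :=
          setLIntegral_le_lintegral _ _
      _ = ENNReal.ofReal (∏ k, Real.sqrt (π/(1 - l * a k))) :=
          gaussLike (fun k => 1 - l * a k) hpos
  -- positivity and finiteness facts
  have hsqpiN : (0:ℝ) < (Real.sqrt π)^N := by positivity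
  have hUJ0 : U * J ≠ 0 := by rw [hUJ]; exact (ENNReal.ofReal_pos.2 hsqpiN).ne'
  have hUJtop : U * J ≠ ⊤ := by rw [hUJ]; exact ENNReal.ofReal_ne_top
  have hU0 : U ≠ 0 := fun h => hUJ0 (by rw [h, zero_mul])
  have hUtop : U ≠ ⊤ := by
    rw [hU_def]
    exact measure_ne_top _ _
  -- final assembly
  have hgoal_eq : sphereUniform N {u | 0 ≤ ∑ k, a k * ((u : EuclideanSpace ℝ (Fin N)) k)^2}
      = U⁻¹ * X := by
    rw [sphereUniform, Measure.smul_apply, smul_eq_mul, hU_def, hX_def]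
  rw [hgoal_eq]
  rw [← ENNReal.mul_le_mul_iff_left hUJ0 hUJtop]
  calc U⁻¹ * X * (U * J) = (U⁻¹ * U) * (X * J) := by ring
    _ = X * J := by rw [ENNReal.inv_mul_cancel hU0 hUtop, one_mul]
    _ ≤ ENNReal.ofReal (∏ k, Real.sqrt (π/(1 - l * a k))) := hXJ
    _ ≤ ENNReal.ofReal (rexp (-(N*r^2)/(4*B*(B+r))) * (Real.sqrt π)^N) :=
        ENNReal.ofReal_le_ofReal hprod
    _ = ENNReal.ofReal (rexp (-(N*r^2)/(4*B*(B+r)))) * (U * J) := by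
        rw [hUJ, ← ENNReal.ofReal_mul (Real.exp_pos _).le]

lemma sphere_sum_sq (u : Metric.sphere (0 : EuclideanSpace ℝ (Fin N)) 1) :
    ∑ k, ((u : EuclideanSpace ℝ (Fin N)) k)^2 = 1 := by
  rw [← norm_sq_eq, mem_sphere_zero_iff_norm.1 u.2, one_pow]

set_option maxHeartbeats 1000000 in
/-- For `u` uniform on the unit sphere of `ℝ^N` and nonnegative constants
`s_k ≤ b s̄` where `s̄ = N⁻¹ ∑ s_k > 0`, for every `t > 0` both
`Pr{∑ s_k u_k² ≥ s̄ (1 + t)}` and `Pr{∑ s_k u_k² ≤ s̄ (1 - t)}` are bounded by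
`exp (-N t² / (4 b (b + t)))`. -/
theorem sphere_quadratic_relative_deviation (N : ℕ) (hN : 0 < N) (s : Fin N → ℝ) (b t : ℝ)
    (hs : ∀ k, 0 ≤ s k)
    (hmean : 0 < (1 / N : ℝ) * ∑ k, s k)
    (hsb : ∀ k, s k ≤ b * ((1 / N : ℝ) * ∑ k, s k))
    (ht : 0 < t) :
    sphereUniform N
        {u | ((1 / N : ℝ) * ∑ k, s k) * (1 + t) ≤
          ∑ k, s k * ((u : EuclideanSpace ℝ (Fin N)) k) ^ 2}
      ≤ ENNReal.ofReal (Real.exp (-(N * t ^ 2) / (4 * b * (b + t)))) ∧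
    sphereUniform N
        {u | ∑ k, s k * ((u : EuclideanSpace ℝ (Fin N)) k) ^ 2 ≤
          ((1 / N : ℝ) * ∑ k, s k) * (1 - t)}
      ≤ ENNReal.ofReal (Real.exp (-(N * t ^ 2) / (4 * b * (b + t)))) := by
  obtain ⟨sbar, hsbar_def⟩ : ∃ sb : ℝ, sb = (1 / N : ℝ) * ∑ k, s k := ⟨_, rfl⟩
  rw [← hsbar_def] at hmean hsb ⊢
  have hNR : (0:ℝ) < N := by exact_mod_cast hN
  have hsum_eq : ∑ k, s k = N * sbar := by
    rw [hsbar_def]; field_simp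
  have hb1 : 1 ≤ b := by
    have h1 : ∑ k, s k ≤ ∑ _k : Fin N, b * sbar := Finset.sum_le_sum fun k _ => hsb k
    rw [Finset.sum_const, Finset.card_univ, Fintype.card_fin, nsmul_eq_mul, hsum_eq] at h1
    have := (mul_le_mul_iff_right₀ hNR).1 h1
    nlinarith [hmean]
  have hb0 : 0 < b := by linarith
  have hB : (0:ℝ) < b * sbar := by positivity
  have hexp_eq : -(N*(t*sbar)^2)/(4*(b*sbar)*((b*sbar)+(t*sbar))) = -(N * t^2) / (4*b*(b+t)) := by
    have hs0 : sbar ≠ 0 := ne_of_gt hmean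
    field_simp
  constructor
  · -- upper tail
    rcases le_or_gt t (b - 1) with hcase | hcase
    · have hset : {u : Metric.sphere (0 : EuclideanSpace ℝ (Fin N)) 1 |
            sbar * (1 + t) ≤ ∑ k, s k * ((u : EuclideanSpace ℝ (Fin N)) k) ^ 2}
          = {u : Metric.sphere (0 : EuclideanSpace ℝ (Fin N)) 1 | 0 ≤ ∑ k, (s k - sbar * (1+t)) * ((u : EuclideanSpace ℝ (Fin N)) k)^2} := by
        ext u
        have h1 := sphere_sum_sq u
        simp only [Set.mem_setOf_eq]
        have he : ∑ k, (s k - sbar * (1+t)) * ((u : EuclideanSpace ℝ (Fin N)) k)^2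
            = (∑ k, s k * ((u : EuclideanSpace ℝ (Fin N)) k)^2) - sbar * (1+t) := by
          calc ∑ k, (s k - sbar * (1+t)) * ((u : EuclideanSpace ℝ (Fin N)) k)^2
              = ∑ k, (s k * ((u : EuclideanSpace ℝ (Fin N)) k)^2
                  - sbar * (1+t) * ((u : EuclideanSpace ℝ (Fin N)) k)^2) :=
                Finset.sum_congr rfl fun k _ => by ring
            _ = (∑ k, s k * ((u : EuclideanSpace ℝ (Fin N)) k)^2)
                  - sbar * (1+t) * ∑ k, ((u : EuclideanSpace ℝ (Fin N)) k)^2 := by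
                rw [Finset.sum_sub_distrib, Finset.mul_sum]
            _ = _ := by rw [h1, mul_one]
        rw [he]
        constructor <;> intro h <;> linarith
      rw [hset]
      have hbd := tail_bound hN (fun k => s k - sbar*(1+t)) (b*sbar) (t*sbar) hB
        (by positivity) ?_ ?_ ?_
      · rw [hexp_eq] at hbd
        exact hbd
      · intro k
        have := hsb k
        have : sbar * (1+t) > 0 := by positivity
        nlinarith [hsb k]
      · rw [Finset.sum_sub_distrib, Finset.sum_const, Finset.card_univ, Fintype.card_fin,
          nsmul_eq_mul, hsum_eq]
        ring_nf
        nlinarith []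
      · -- variance bound
        have hptw : ∀ k, (s k - sbar*(1+t))^2
            ≤ (sbar*(1+t))^2 + s k * (b*sbar - 2*(sbar*(1+t))) := by
          intro k
          nlinarith [mul_nonneg (hs k) (sub_nonneg.2 (hsb k)), hs k, hsb k]
        calc ∑ k, (s k - sbar*(1+t))^2
            ≤ ∑ k, ((sbar*(1+t))^2 + s k * (b*sbar - 2*(sbar*(1+t)))) :=
              Finset.sum_le_sum fun k _ => hptw k
          _ = N * (sbar*(1+t))^2 + (N*sbar) * (b*sbar - 2*(sbar*(1+t))) := by
              rw [Finset.sum_add_distrib, Finset.sum_const, Finset.card_univ, Fintype.card_fin,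
                nsmul_eq_mul, ← Finset.sum_mul, hsum_eq]
          _ ≤ N * (b*sbar)^2 := by
              have hq : (1+t)^2 + b - 2*(1+t) - b^2 ≤ 0 := by
                nlinarith [mul_nonneg (sub_nonneg.2 (show (1:ℝ)+t ≤ b by linarith))
                  (show (0:ℝ) ≤ b + (1+t) - 1 by linarith)]
              have hkey : (sbar*(1+t))^2 + sbar*(b*sbar) - 2*sbar*(sbar*(1+t)) ≤ (b*sbar)^2 := by
                nlinarith [mul_nonneg (neg_nonneg.2 hq) (sq_nonneg sbar)]
              nlinarith [mul_le_mul_of_nonneg_left hkey (le_of_lt hNR)]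
    · -- event empty
      have hset : {u : Metric.sphere (0 : EuclideanSpace ℝ (Fin N)) 1 |
            sbar * (1 + t) ≤ ∑ k, s k * ((u : EuclideanSpace ℝ (Fin N)) k) ^ 2} = ∅ := by
        rw [Set.eq_empty_iff_forall_notMem]
        intro u hu
        simp only [Set.mem_setOf_eq] at hu
        have hle : ∑ k, s k * ((u : EuclideanSpace ℝ (Fin N)) k)^2
            ≤ ∑ k, (b*sbar) * ((u : EuclideanSpace ℝ (Fin N)) k)^2 :=
          Finset.sum_le_sum fun k _ => mul_le_mul_of_nonneg_right (hsb k) (sq_nonneg _)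
        rw [← Finset.mul_sum, sphere_sum_sq u, mul_one] at hle
        nlinarith [hmean]
      rw [hset, measure_empty]
      exact zero_le
  · -- lower tail
    rcases le_or_gt t 1 with hcase | hcase
    · have hset : {u : Metric.sphere (0 : EuclideanSpace ℝ (Fin N)) 1 |
            ∑ k, s k * ((u : EuclideanSpace ℝ (Fin N)) k) ^ 2 ≤ sbar * (1 - t)}
          = {u : Metric.sphere (0 : EuclideanSpace ℝ (Fin N)) 1 | 0 ≤ ∑ k, (sbar * (1-t) - s k) * ((u : EuclideanSpace ℝ (Fin N)) k)^2} := by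
        ext u
        have h1 := sphere_sum_sq u
        simp only [Set.mem_setOf_eq]
        have he : ∑ k, (sbar * (1-t) - s k) * ((u : EuclideanSpace ℝ (Fin N)) k)^2
            = sbar * (1-t) - (∑ k, s k * ((u : EuclideanSpace ℝ (Fin N)) k)^2) := by
          calc ∑ k, (sbar * (1-t) - s k) * ((u : EuclideanSpace ℝ (Fin N)) k)^2
              = ∑ k, (sbar * (1-t) * ((u : EuclideanSpace ℝ (Fin N)) k)^2
                  - s k * ((u : EuclideanSpace ℝ (Fin N)) k)^2) :=
                Finset.sum_congr rfl fun k _ => by ring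
            _ = sbar * (1-t) * (∑ k, ((u : EuclideanSpace ℝ (Fin N)) k)^2)
                  - ∑ k, s k * ((u : EuclideanSpace ℝ (Fin N)) k)^2 := by
                rw [Finset.sum_sub_distrib, Finset.mul_sum]
            _ = _ := by rw [h1, mul_one]
        rw [he]
        constructor <;> intro h <;> linarith
      rw [hset]
      have hbd := tail_bound hN (fun k => sbar*(1-t) - s k) (b*sbar) (t*sbar) hB
        (by positivity) ?_ ?_ ?_
      · rw [hexp_eq] at hbd
        exact hbd
      · intro k
        nlinarith [hs k, hmean]
      · rw [Finset.sum_sub_distrib, Finset.sum_const, Finset.card_univ, Fintype.card_fin,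
          nsmul_eq_mul, hsum_eq]
        ring_nf
        nlinarith []
      · have hptw : ∀ k, (sbar*(1-t) - s k)^2
            ≤ (sbar*(1-t))^2 + s k * (b*sbar - 2*(sbar*(1-t))) := by
          intro k
          nlinarith [mul_nonneg (hs k) (sub_nonneg.2 (hsb k))]
        calc ∑ k, (sbar*(1-t) - s k)^2
            ≤ ∑ k, ((sbar*(1-t))^2 + s k * (b*sbar - 2*(sbar*(1-t)))) :=
              Finset.sum_le_sum fun k _ => hptw k
          _ = N * (sbar*(1-t))^2 + (N*sbar) * (b*sbar - 2*(sbar*(1-t))) := by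
              rw [Finset.sum_add_distrib, Finset.sum_const, Finset.card_univ, Fintype.card_fin,
                nsmul_eq_mul, ← Finset.sum_mul, hsum_eq]
          _ ≤ N * (b*sbar)^2 := by
              have hq : (1-t)^2 + b - 2*(1-t) - b^2 ≤ 0 := by
                nlinarith [mul_nonneg (show (0:ℝ) ≤ 1-t by linarith) (show (0:ℝ) ≤ 1+t by linarith),
                  mul_nonneg (sub_nonneg.2 hb1) hb0.le]
              have hkey : (sbar*(1-t))^2 + sbar*(b*sbar) - 2*sbar*(sbar*(1-t)) ≤ (b*sbar)^2 := by
                nlinarith [mul_nonneg (neg_nonneg.2 hq) (sq_nonneg sbar)]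
              nlinarith [mul_le_mul_of_nonneg_left hkey (le_of_lt hNR)]
    · have hset : {u : Metric.sphere (0 : EuclideanSpace ℝ (Fin N)) 1 |
            ∑ k, s k * ((u : EuclideanSpace ℝ (Fin N)) k) ^ 2 ≤ sbar * (1 - t)} = ∅ := by
        rw [Set.eq_empty_iff_forall_notMem]
        intro u hu
        simp only [Set.mem_setOf_eq] at hu
        have hge : (0:ℝ) ≤ ∑ k, s k * ((u : EuclideanSpace ℝ (Fin N)) k)^2 :=
          Finset.sum_nonneg fun k _ => mul_nonneg (hs k) (sq_nonneg _)
        nlinarith [hmean]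
      rw [hset, measure_empty]
      exact zero_le
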